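/- Let n be an integer divisible by 6 and let V = X ∪ Y be a set of n vertices with X ∩ Y = ∅ and |X| = n/3 − 1. Let H₀ be the 3-graph on V whose edges are exactly the 3-element subsets of V that intersect X. Then δ₂(H₀) = n/3 − 1 and H₀ does not contain a C₆³-factor. -/

import Mathlib

/-- The degree of a vertex set `S` in the hypergraph with edge set `E`:
the number of edges containing `S`. -/
def degS {n : ℕ} (E : Finset (Finset (Fin n))) (S : Finset (Fin n)) : ℕ :=
  (E.filter (fun e => S ⊆ e)).card

/-- `s` spans a copy of `C₆³` (edges 123, 345, 561) in the 3-graph with edge set `E`. -/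
def IsC6Copy {n : ℕ} (E : Finset (Finset (Fin n))) (s : Finset (Fin n)) : Prop :=
  ∃ v : Fin 6 → Fin n, Function.Injective v ∧
    s = {v 0, v 1, v 2, v 3, v 4, v 5} ∧
    {v 0, v 1, v 2} ∈ E ∧ {v 2, v 3, v 4} ∈ E ∧ {v 4, v 5, v 0} ∈ E

/-- The set `W` can be perfectly tiled by vertex-disjoint copies of `C₆³`
(seen as a `C₆³`-factor of the subhypergraph induced on `W`). -/
def HasC6Factor {n : ℕ} (E : Finset (Finset (Fin n))) (W : Finset (Fin n)) : Prop :=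
  ∃ P : Finset (Finset (Fin n)), (∀ s ∈ P, IsC6Copy E s) ∧
    (∀ s ∈ P, ∀ t ∈ P, s ≠ t → Disjoint s t) ∧ P.biUnion id = W

lemma deg_lb {n : ℕ} (E : Finset (Finset (Fin n))) (S T : Finset (Fin n))
    (hd : ∀ v ∈ T, v ∉ S) (h : ∀ v ∈ T, insert v S ∈ E) : T.card ≤ degS E S := by
  classical
  apply Finset.card_le_card_of_injOn (fun v => insert v S)
  · intro v hv
    simp only [degS, Finset.mem_coe, Finset.mem_filter]
    exact ⟨h v hv, Finset.subset_insert _ _⟩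
  · intro a ha b hb hab
    have hab' : insert a S = insert b S := hab
    have : a ∈ insert b S := hab' ▸ Finset.mem_insert_self a S
    rcases Finset.mem_insert.mp this with h' | h'
    · exact h'
    · exact absurd h' (hd a ha)

lemma c6_card {n : ℕ} {E : Finset (Finset (Fin n))} {s : Finset (Fin n)}
    (h : IsC6Copy E s) : s.card = 6 := by
  obtain ⟨v, hinj, hs, -, -, -⟩ := h
  have : s = Finset.image v Finset.univ := by
    rw [hs]
    ext x
    simp only [Finset.mem_insert, Finset.mem_singleton, Finset.mem_image,
      Finset.mem_univ, true_and]
    constructor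
    · rintro (h | h | h | h | h | h) <;> exact ⟨_, h.symm⟩
    · rintro ⟨i, rfl⟩
      fin_cases i <;> simp
  rw [this, Finset.card_image_of_injective _ hinj, Finset.card_univ, Fintype.card_fin]

theorem extremal_example (n : ℕ) (hn : 0 < n) (h6 : 6 ∣ n)
    (X Y : Finset (Fin n)) (hXY : Disjoint X Y) (hcover : X ∪ Y = Finset.univ)
    (hX : X.card = n / 3 - 1)
    (E : Finset (Finset (Fin n)))
    (hE : E = (Finset.powersetCard 3 Finset.univ).filter (fun e => (e ∩ X).Nonempty)) :
    (∀ S : Finset (Fin n), S.card = 2 → n / 3 - 1 ≤ degS E S) ∧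
    (∃ S : Finset (Fin n), S.card = 2 ∧ degS E S = n / 3 - 1) ∧
    ¬ HasC6Factor E Finset.univ := by
  classical
  obtain ⟨k, rfl⟩ := h6
  have hk : 1 ≤ k := by omega
  have hcardn : Fintype.card (Fin (6 * k)) = 6 * k := Fintype.card_fin _
  -- membership in E
  have hmemE : ∀ e : Finset (Fin (6 * k)), e ∈ E ↔ e.card = 3 ∧ (e ∩ X).Nonempty := by
    intro e
    rw [hE]
    simp [Finset.mem_powersetCard, Finset.subset_univ]
  -- the generic insert lemma
  have hins : ∀ (S : Finset (Fin (6 * k))), S.card = 2 → ∀ v ∉ S,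
      (insert v S ∩ X).Nonempty → insert v S ∈ E := by
    intro S hS v hv hx
    rw [hmemE]
    exact ⟨by rw [Finset.card_insert_of_notMem hv, hS], hx⟩
  refine ⟨?_, ?_, ?_⟩
  · -- lower bound for all pairs
    intro S hS
    by_cases hSX : (S ∩ X).Nonempty
    · -- any v outside S works
      have hle : (Finset.univ \ S).card ≤ degS E S := by
        apply deg_lb
        · intro v hv
          exact (Finset.mem_sdiff.mp hv).2
        · intro v hv
          apply hins S hS v (Finset.mem_sdiff.mp hv).2
          obtain ⟨x, hx⟩ := hSX
          exact ⟨x, by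
            simp only [Finset.mem_inter, Finset.mem_insert] at *
            exact ⟨Or.inr hx.1, hx.2⟩⟩
      have hcard : (Finset.univ \ S).card = 6 * k - 2 := by
        rw [Finset.card_sdiff_of_subset (Finset.subset_univ S), Finset.card_univ, hcardn, hS]
      omega
    · -- S misses X : use vertices of X
      have hle : X.card ≤ degS E S := by
        apply deg_lb
        · intro v hv hvS
          exact hSX ⟨v, Finset.mem_inter.mpr ⟨hvS, hv⟩⟩
        · intro v hv
          exact hins S hS v (fun hvS => hSX ⟨v, Finset.mem_inter.mpr ⟨hvS, hv⟩⟩)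
            ⟨v, Finset.mem_inter.mpr ⟨Finset.mem_insert_self _ _, hv⟩⟩
      omega
  · -- a pair inside Y has degree exactly |X|
    have hYcard : Y.card = 6 * k - (2 * k - 1) := by
      have := Finset.card_union_of_disjoint hXY
      rw [hcover, Finset.card_univ, hcardn] at this
      omega
    have h2Y : 2 ≤ Y.card := by omega
    obtain ⟨a, ha, b, hb, hab⟩ := Finset.one_lt_card.mp (by omega : 1 < Y.card)
    refine ⟨{a, b}, ?_, ?_⟩
    · rw [Finset.card_insert_of_notMem (by simpa using hab), Finset.card_singleton]
    · set S : Finset (Fin (6 * k)) := {a, b} with hSdef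
      have hScard : S.card = 2 := by
        rw [hSdef, Finset.card_insert_of_notMem (by simpa using hab),
          Finset.card_singleton]
      have hSY : S ⊆ Y := by
        intro x hx
        rcases Finset.mem_insert.mp hx with rfl | hx
        · exact ha
        · rw [Finset.mem_singleton.mp hx]; exact hb
      have hSX : ∀ x ∈ X, x ∉ S := fun x hx hxS =>
        (Finset.disjoint_left.mp hXY hx) (hSY hxS)
      have key : E.filter (fun e => S ⊆ e) = X.image (fun x => insert x S) := by
        ext e
        simp only [Finset.mem_filter, Finset.mem_image]
        constructor
        · rintro ⟨heE, hSe⟩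
          rw [hmemE] at heE
          obtain ⟨hcard3, x, hx⟩ := heE
          rw [Finset.mem_inter] at hx
          have hxS : x ∉ S := fun h => Finset.disjoint_left.mp hXY hx.2 (hSY h)
          refine ⟨x, hx.2, ?_⟩
          apply Finset.eq_of_subset_of_card_le
          · exact Finset.insert_subset hx.1 hSe
          · rw [hcard3, Finset.card_insert_of_notMem hxS, hScard]
        · rintro ⟨x, hx, rfl⟩
          exact ⟨hins S hScard x (hSX x hx)
            ⟨x, Finset.mem_inter.mpr ⟨Finset.mem_insert_self _ _, hx⟩⟩,
            Finset.subset_insert _ _⟩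
      rw [degS, key, Finset.card_image_of_injOn, hX]
      intro x hx y hy hxy
      have hxy' : insert x S = insert y S := hxy
      have : x ∈ insert y S := hxy' ▸ Finset.mem_insert_self x S
      rcases Finset.mem_insert.mp this with h' | h'
      · exact h'
      · exact absurd h' (hSX x hx)
  · -- no C6 factor
    rintro ⟨P, hcopy, hdisj, hunion⟩
    -- each copy meets X in at least 2 vertices
    have hmeet : ∀ s ∈ P, 2 ≤ (s ∩ X).card := by
      intro s hs
      obtain ⟨v, hinj, hseq, he1, he2, he3⟩ := hcopy s hs
      rw [hmemE] at he1 he2 he3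
      obtain ⟨x1, hx1⟩ := he1.2
      obtain ⟨x2, hx2⟩ := he2.2
      obtain ⟨x3, hx3⟩ := he3.2
      rw [Finset.mem_inter] at hx1 hx2 hx3
      have hx1s : x1 ∈ s ∩ X := by
        rw [Finset.mem_inter, hseq]
        refine ⟨?_, hx1.2⟩
        have := hx1.1
        simp only [Finset.mem_insert, Finset.mem_singleton] at this ⊢
        tauto
      have hx2s : x2 ∈ s ∩ X := by
        rw [Finset.mem_inter, hseq]
        refine ⟨?_, hx2.2⟩
        have := hx2.1
        simp only [Finset.mem_insert, Finset.mem_singleton] at this ⊢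
        tauto
      have hx3s : x3 ∈ s ∩ X := by
        rw [Finset.mem_inter, hseq]
        refine ⟨?_, hx3.2⟩
        have := hx3.1
        simp only [Finset.mem_insert, Finset.mem_singleton] at this ⊢
        tauto
      by_contra hlt
      have hle1 : (s ∩ X).card ≤ 1 := by omega
      have h12 : x1 = x2 := Finset.card_le_one.mp hle1 _ hx1s _ hx2s
      have h13 : x1 = x3 := Finset.card_le_one.mp hle1 _ hx1s _ hx3s
      have m1 := hx1.1
      have m2 := hx2.1
      have m3 := hx3.1
      rw [← h12] at m2
      rw [← h13] at m3
      simp only [Finset.mem_insert, Finset.mem_singleton] at m1 m2 m3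
      -- derive contradiction from injectivity
      rcases m1 with rfl | rfl | rfl <;> rcases m2 with h | h | h <;>
        first
          | (exact absurd (hinj h) (by decide))
          | (rcases m3 with h' | h' | h' <;> exact absurd (hinj h') (by decide))
    -- counting
    have hdisjX : ∀ s ∈ P, ∀ t ∈ P, s ≠ t →
        Disjoint (s ∩ X) (t ∩ X) := by
      intro s hs t ht hst
      exact Finset.disjoint_of_subset_left (Finset.inter_subset_left)
        (Finset.disjoint_of_subset_right (Finset.inter_subset_left) (hdisj s hs t ht hst))
    have hXeq : X = P.biUnion (fun s => s ∩ X) := by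
      ext x
      simp only [Finset.mem_biUnion, Finset.mem_inter]
      constructor
      · intro hx
        have : x ∈ P.biUnion id := by rw [hunion]; exact Finset.mem_univ x
        obtain ⟨s, hs, hxs⟩ := Finset.mem_biUnion.mp this
        exact ⟨s, hs, hxs, hx⟩
      · rintro ⟨s, hs, -, hx⟩
        exact hx
    have hXcard : X.card = ∑ s ∈ P, (s ∩ X).card := by
      conv_lhs => rw [hXeq]
      exact Finset.card_biUnion hdisjX
    have hPcard : 6 * P.card = 6 * k := by
      have : (P.biUnion id).card = ∑ s ∈ P, s.card := Finset.card_biUnion hdisj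
      rw [hunion, Finset.card_univ, hcardn,
        Finset.sum_congr rfl (fun s hs => c6_card (hcopy s hs)), Finset.sum_const,
        smul_eq_mul] at this
      omega
    have hsum : 2 * P.card ≤ ∑ s ∈ P, (s ∩ X).card := by
      calc 2 * P.card = ∑ _s ∈ P, 2 := by rw [Finset.sum_const, smul_eq_mul, mul_comm]
        _ ≤ _ := Finset.sum_le_sum hmeet
    have hX3 : X.card = 2 * k - 1 := by rw [hX]; omega
    omega
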